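/- Let G be a regular subgroup of S_n admitting an abelian decomposition G = AB with A, B abelian subgroups, let σ : G → C_{S_n}(G) be the standard anti-isomorphism (with respect to some i₀), and set B₁ = σ(B). Then the subgroup K = ⟨A, B₁⟩ of S_n is abelian, has order n, and acts regularly on {1,...,n}. -/

import Mathlib

/-- If `G` is a regular subgroup of `S_n` with an abelian decomposition
`G = AB`, and `σ : G → C_{S_n}(G)` is the standard anti-isomorphism with `B₁ = σ(B)`,
then `K = ⟨A, B₁⟩` is abelian of order `n` and acts regularly (simply transitively)
on `{1,...,n}`. -/
theorem abelian_decomposition_gives_abelian_regular_subgroup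
    {n : ℕ} (G : Subgroup (Equiv.Perm (Fin n)))
    (hcard : Nat.card G = n)
    (htrans : ∀ i j : Fin n, ∃ g ∈ G, g i = j)
    (A B : Subgroup (Equiv.Perm (Fin n))) (hA : A ≤ G) (hB : B ≤ G)
    (hAab : ∀ a ∈ A, ∀ a' ∈ A, a * a' = a' * a)
    (hBab : ∀ b ∈ B, ∀ b' ∈ B, b * b' = b' * b)
    (hdec : ∀ g ∈ G, ∃ a ∈ A, ∃ b ∈ B, g = a * b)
    (i₀ : Fin n)
    (σ : G → Equiv.Perm (Fin n))
    (hσ : ∀ (h : G) (i : Fin n), ∀ g : G, (g : Equiv.Perm (Fin n)) i₀ = i →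
      σ h i = (g : Equiv.Perm (Fin n)) ((h : Equiv.Perm (Fin n)) i₀))
    (hσanti : ∀ g h : G, σ (g * h) = σ h * σ g)
    (hσbij : Function.Injective σ ∧
      Set.range σ = (Subgroup.centralizer (G : Set (Equiv.Perm (Fin n))) :
        Set (Equiv.Perm (Fin n)))) :
    ∀ K : Subgroup (Equiv.Perm (Fin n)),
      K = Subgroup.closure ((A : Set (Equiv.Perm (Fin n))) ∪
            (σ '' {g : G | (g : Equiv.Perm (Fin n)) ∈ B})) →
      ((∀ x ∈ K, ∀ y ∈ K, x * y = y * x) ∧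
        Nat.card K = n ∧
        ∀ i j : Fin n, ∃! k : K, (k : Equiv.Perm (Fin n)) i = j) := by
  intro K hK
  have hσcent : ∀ h : G, σ h ∈ Subgroup.centralizer (G : Set (Equiv.Perm (Fin n))) := by
    intro h
    have hr : σ h ∈ Set.range σ := ⟨h, rfl⟩
    rw [hσbij.2] at hr
    exact hr
  set S : Set (Equiv.Perm (Fin n)) :=
    (A : Set (Equiv.Perm (Fin n))) ∪ (σ '' {g : G | (g : Equiv.Perm (Fin n)) ∈ B}) with hS
  -- generators pairwise commute
  have hcomm : ∀ x ∈ S, ∀ y ∈ S, x * y = y * x := by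
    rintro x hx y hy
    rcases hx with hx | ⟨g, hg, rfl⟩
    · rcases hy with hy | ⟨h, hh, rfl⟩
      · exact hAab x hx y hy
      · exact Subgroup.mem_centralizer_iff.mp (hσcent h) x (hA hx)
    · rcases hy with hy | ⟨h, hh, rfl⟩
      · exact (Subgroup.mem_centralizer_iff.mp (hσcent g) y (hA hy)).symm
      · have hgh : g * h = h * g := Subtype.ext (hBab _ hg _ hh)
        calc σ g * σ h = σ (h * g) := (hσanti h g).symm
          _ = σ (g * h) := by rw [hgh]
          _ = σ h * σ g := hσanti g h
  -- K is abelian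
  have hKcomm : ∀ x ∈ K, ∀ y ∈ K, x * y = y * x := by
    have h1 : Subgroup.closure S ≤ Subgroup.centralizer S := by
      rw [Subgroup.closure_le]
      intro s hs
      rw [SetLike.mem_coe, Subgroup.mem_centralizer_iff]
      intro t ht
      exact hcomm t ht s hs
    have h2 : Subgroup.closure S ≤
        Subgroup.centralizer ((Subgroup.closure S : Subgroup (Equiv.Perm (Fin n))) :
          Set (Equiv.Perm (Fin n))) := by
      rw [Subgroup.closure_le]
      intro s hs
      rw [SetLike.mem_coe, Subgroup.mem_centralizer_iff]
      intro t ht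
      exact (Subgroup.mem_centralizer_iff.mp (h1 ht) s hs).symm
    intro x hx y hy
    rw [hK] at hx hy
    exact (Subgroup.mem_centralizer_iff.mp (h2 hx) y hy).symm
  -- σ evaluated at i₀
  have hσi₀ : ∀ h : G, σ h i₀ = (h : Equiv.Perm (Fin n)) i₀ := by
    intro h
    have := hσ h i₀ 1 (by simp)
    simpa using this
  -- transitivity from i₀
  have htransK : ∀ j : Fin n, ∃ k ∈ K, (k : Equiv.Perm (Fin n)) i₀ = j := by
    intro j
    obtain ⟨g, hg, hgj⟩ := htrans i₀ j
    obtain ⟨a, ha, b, hb, hab⟩ := hdec g hg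
    have hbB : ((⟨b, hB hb⟩ : G) : Equiv.Perm (Fin n)) ∈ B := hb
    refine ⟨a * σ ⟨b, hB hb⟩, ?_, ?_⟩
    · rw [hK]
      exact mul_mem (Subgroup.subset_closure (Or.inl ha))
        (Subgroup.subset_closure (Or.inr ⟨⟨b, hB hb⟩, hbB, rfl⟩))
    · have : σ (⟨b, hB hb⟩ : G) i₀ = b i₀ := hσi₀ _
      simp only [Equiv.Perm.mul_apply, this]
      rw [← Equiv.Perm.mul_apply, ← hab]
      exact hgj
  -- agreement at one point implies equality in K
  have hagree : ∀ k ∈ K, ∀ k' ∈ K, ∀ i : Fin n,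
      (k : Equiv.Perm (Fin n)) i = k' i → k = k' := by
    intro k hk k' hk' i hki
    refine Equiv.ext fun p => ?_
    obtain ⟨c1, hc1, hc1i⟩ := htransK i
    obtain ⟨c2, hc2, hc2p⟩ := htransK p
    have hc : c2 * c1⁻¹ ∈ K := mul_mem hc2 (inv_mem hc1)
    have hcip : (c2 * c1⁻¹) i = p := by
      have : c1⁻¹ i = i₀ := by rw [← hc1i]; exact Equiv.symm_apply_apply c1 i₀
      rw [Equiv.Perm.mul_apply, this, hc2p]
    calc k p = k ((c2 * c1⁻¹) i) := by rw [hcip]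
      _ = (k * (c2 * c1⁻¹)) i := rfl
      _ = ((c2 * c1⁻¹) * k) i := by rw [hKcomm k hk _ hc]
      _ = (c2 * c1⁻¹) (k i) := rfl
      _ = (c2 * c1⁻¹) (k' i) := by rw [hki]
      _ = ((c2 * c1⁻¹) * k') i := rfl
      _ = (k' * (c2 * c1⁻¹)) i := by rw [hKcomm _ hc k' hk']
      _ = k' ((c2 * c1⁻¹) i) := rfl
      _ = k' p := by rw [hcip]
  -- regularity
  have hreg : ∀ i j : Fin n, ∃! k : K, (k : Equiv.Perm (Fin n)) i = j := by
    intro i j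
    obtain ⟨c1, hc1, hc1i⟩ := htransK i
    obtain ⟨c2, hc2, hc2j⟩ := htransK j
    have hmem : c2 * c1⁻¹ ∈ K := mul_mem hc2 (inv_mem hc1)
    have hval : (c2 * c1⁻¹) i = j := by
      have : c1⁻¹ i = i₀ := by rw [← hc1i]; exact Equiv.symm_apply_apply c1 i₀
      rw [Equiv.Perm.mul_apply, this, hc2j]
    refine ⟨⟨c2 * c1⁻¹, hmem⟩, hval, ?_⟩
    rintro ⟨y, hy⟩ hyi
    exact Subtype.ext (hagree y hy _ hmem i (by rw [hyi, hval]))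
  refine ⟨hKcomm, ?_, hreg⟩
  -- cardinality
  have hbij : Function.Bijective (fun k : K => (k : Equiv.Perm (Fin n)) i₀) := by
    constructor
    · rintro ⟨k, hk⟩ ⟨k', hk'⟩ h
      exact Subtype.ext (hagree k hk k' hk' i₀ h)
    · intro j
      obtain ⟨k, hk, hkj⟩ := htransK j
      exact ⟨⟨k, hk⟩, hkj⟩
  rw [Nat.card_eq_of_bijective _ hbij, Nat.card_eq_fintype_card, Fintype.card_fin]
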